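/- With the notation of the context, for every particle array v ∈ Z^{T·M} and every index path k ∈ {1,…,M}^T one has G_θ((s_{1,k}(v))^{(𝟏)}) · Φ_{θ,ϑ}(s_{1,k}(v)) · b_{θ,ϑ}(k | s_{1,k}(v)) = G_θ(v^{(𝟏)}) · Φ_{θ,ϑ}(v) · b_{θ,ϑ}(k | v) · ∏_{t=1}^T [γ_{t,θ}(v_t^{(k_t)})/γ_{t,θ,ϑ}(v_t^{(k_t)})] · [γ_{t,θ,ϑ}(v_t^{(1)})/γ_{t,θ}(v_t^{(1)})]. -/

import Mathlib

open MeasureTheory Finset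

namespace MHAARRB5

variable {Z : Type*}

/-- The path `v^{(k)}` extracted from the particle array `v`. -/
def pathOf (n m : ℕ) (v : Fin (n + 1) → Fin (m + 1) → Z)
    (k : Fin (n + 1) → Fin (m + 1)) : Fin (n + 1) → Z := fun t => v t (k t)

/-- The constant index path `𝟏`. -/
def onePath (n m : ℕ) : Fin (n + 1) → Fin (m + 1) := fun _ => 0

/-- The swap operator `s_{1,k}`. -/
def swapArr (n m : ℕ) (k : Fin (n + 1) → Fin (m + 1))
    (v : Fin (n + 1) → Fin (m + 1) → Z) : Fin (n + 1) → Fin (m + 1) → Z :=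
  fun t i => v t (Equiv.swap 0 (k t) i)

/-- `G_θ(z) = ∏_t γ_{t,θ}(z_t)`. -/
noncomputable def G (n : ℕ) (γ : Fin (n + 1) → Z → ℝ) (z : Fin (n + 1) → Z) : ℝ :=
  ∏ t, γ t (z t)

/-- The proposal density `Φ_{θ,ϑ}(v) = ∏_t ∏_{i≥2} q_{t,θ,ϑ}(v_t^{(i)})`. -/
noncomputable def Phi (n m : ℕ) (qp : Fin (n + 1) → Z → ℝ)
    (v : Fin (n + 1) → Fin (m + 1) → Z) : ℝ :=
  ∏ t, ∏ i ∈ univ.erase (0 : Fin (m + 1)), qp t (v t i)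

/-- The selection probabilities `b_{θ,ϑ}(k|v)`. -/
noncomputable def bSel (n m : ℕ) (γ qp : Fin (n + 1) → Z → ℝ)
    (k : Fin (n + 1) → Fin (m + 1)) (v : Fin (n + 1) → Fin (m + 1) → Z) : ℝ :=
  ∏ t, (γ t (v t (k t)) / qp t (v t (k t))) / (∑ j, γ t (v t j) / qp t (v t j))

/-- For every particle array `v` and index path `k`,
`G_θ((s_{1,k}(v))^{(𝟏)}) Φ_{θ,ϑ}(s_{1,k}(v)) b_{θ,ϑ}(k|s_{1,k}(v))
  = G_θ(v^{(𝟏)}) Φ_{θ,ϑ}(v) b_{θ,ϑ}(k|v) ·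
    ∏_t [γ_{t,θ}(v_t^{(k_t)})/γ_{t,θ,ϑ}(v_t^{(k_t)})]·[γ_{t,θ,ϑ}(v_t^{(1)})/γ_{t,θ}(v_t^{(1)})]`. -/
theorem swap_density_identity
    [MeasurableSpace Z] (n m : ℕ)
    (γθ γθϑ qp : Fin (n + 1) → Z → ℝ)
    (hγθm : ∀ t, Measurable (γθ t)) (hγθϑm : ∀ t, Measurable (γθϑ t))
    (hqpm : ∀ t, Measurable (qp t))
    (hγθ : ∀ t z, 0 < γθ t z) (hγθϑ : ∀ t z, 0 < γθϑ t z) (hqp : ∀ t z, 0 < qp t z)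
    (v : Fin (n + 1) → Fin (m + 1) → Z) (k : Fin (n + 1) → Fin (m + 1)) :
    G n γθ (pathOf n m (swapArr n m k v) (onePath n m)) *
        Phi n m qp (swapArr n m k v) * bSel n m γθϑ qp k (swapArr n m k v)
      = G n γθ (pathOf n m v (onePath n m)) * Phi n m qp v * bSel n m γθϑ qp k v *
          ∏ t, (γθ t (v t (k t)) / γθϑ t (v t (k t))) *
            (γθϑ t (v t 0) / γθ t (v t 0)) := by
  simp only [G, Phi, bSel, pathOf, onePath, swapArr]
  rw [← Finset.prod_mul_distrib, ← Finset.prod_mul_distrib, ← Finset.prod_mul_distrib,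
    ← Finset.prod_mul_distrib, ← Finset.prod_mul_distrib]
  apply Finset.prod_congr rfl
  intro t _
  set σ := Equiv.swap (0 : Fin (m + 1)) (k t) with hσ
  have hs0 : σ 0 = k t := Equiv.swap_apply_left _ _
  have hsk : σ (k t) = 0 := Equiv.swap_apply_right _ _
  have hsum : (∑ j, γθϑ t (v t (σ j)) / qp t (v t (σ j)))
      = ∑ j, γθϑ t (v t j) / qp t (v t j) :=
    Equiv.sum_comp σ (fun j => γθϑ t (v t j) / qp t (v t j))
  have hP0 : (0 : ℝ) < ∏ i, qp t (v t i) := Finset.prod_pos fun i _ => hqp t _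
  have h1 : (∏ i ∈ univ.erase (0 : Fin (m + 1)), qp t (v t (σ i)))
      = (∏ i, qp t (v t i)) / qp t (v t (k t)) := by
    rw [eq_div_iff (hqp t _).ne']
    calc (∏ i ∈ univ.erase (0 : Fin (m + 1)), qp t (v t (σ i))) * qp t (v t (k t))
        = (∏ i ∈ univ.erase (0 : Fin (m + 1)), qp t (v t (σ i))) * qp t (v t (σ 0)) := by
          rw [hs0]
      _ = ∏ i, qp t (v t (σ i)) := Finset.prod_erase_mul _ _ (Finset.mem_univ _)
      _ = ∏ i, qp t (v t i) := Equiv.prod_comp σ (fun i => qp t (v t i))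
  have h2 : (∏ i ∈ univ.erase (0 : Fin (m + 1)), qp t (v t i))
      = (∏ i, qp t (v t i)) / qp t (v t 0) := by
    rw [eq_div_iff (hqp t _).ne']
    exact Finset.prod_erase_mul _ _ (Finset.mem_univ _)
  have hSpos : (0 : ℝ) < ∑ j, γθϑ t (v t j) / qp t (v t j) :=
    Finset.sum_pos (fun j _ => div_pos (hγθϑ t _) (hqp t _)) univ_nonempty
  rw [hsum, hs0, hsk, h1, h2]
  have hne1 := (hγθ t (v t (k t))).ne'
  have hne2 := (hγθ t (v t 0)).ne'
  have hne3 := (hγθϑ t (v t (k t))).ne'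
  have hne4 := (hγθϑ t (v t 0)).ne'
  have hne5 := (hqp t (v t (k t))).ne'
  have hne6 := (hqp t (v t 0)).ne'
  field_simp
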